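/- arXiv:1908.10200 — 3 statements merged into one kernel-verified Lean document; each statement's English description precedes it below -/
import Mathlib

section
/- A Hilbert space of Hilbert dimension λ (for infinite λ) has cardinality λ^ℵ₀. -/
open Cardinal Function
open scoped ENNReal

universe v

private lemma lp_card_le {ι : Type v} (hι : Cardinal.aleph0 ≤ Cardinal.mk ι) :
    Cardinal.mk (lp (fun _ : ι => ℂ) 2) ≤ Cardinal.mk ι ^ Cardinal.aleph0 := by
  have hne : Nonempty ι := by
    rw [← Cardinal.mk_ne_zero_iff]
    exact fun h => by simp [h] at hι; exact absurd hι (by simp [Cardinal.aleph0_ne_zero] at *)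
  obtain ⟨i₀⟩ := hne
  -- every element of lp has countable support
  have hcount : ∀ x : lp (fun _ : ι => ℂ) 2, (Function.support (⇑x : ι → ℂ)).Countable := by
    intro x
    have hm : Memℓp (⇑x) 2 := lp.memℓp x
    have hs : Summable fun i => ‖x i‖ ^ (2 : ℝ≥0∞).toReal :=
      (memℓp_gen_iff (by norm_num)).1 hm
    have := hs.countable_support
    refine this.mono ?_
    intro i hi
    simp only [Function.mem_support] at hi ⊢
    exact (Real.rpow_ne_zero (norm_nonneg _) (by norm_num)).mpr (by simpa using hi)
  -- choose an enumeration of the support (padded with i₀)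
  have hex : ∀ x : lp (fun _ : ι => ℂ) 2,
      ∃ e : ℕ → ι, insert i₀ (Function.support (⇑x : ι → ℂ)) = Set.range e := by
    intro x
    exact ((hcount x).insert i₀).exists_eq_range ⟨i₀, Set.mem_insert _ _⟩
  choose e he using hex
  have hinj : Function.Injective (fun x : lp (fun _ : ι => ℂ) 2 =>
      (fun n => (e x n, x (e x n)) : ℕ → ι × ℂ)) := by
    intro x y hxy
    simp only [funext_iff, Prod.mk.injEq] at hxy
    have hrange : Set.range (e x) = Set.range (e y) := by
      ext i; constructor
      · rintro ⟨n, rfl⟩; exact ⟨n, ((hxy n).1).symm⟩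
      · rintro ⟨n, rfl⟩; exact ⟨n, (hxy n).1⟩
    ext i
    by_cases hxi : i ∈ Set.range (e x)
    · obtain ⟨n, rfl⟩ := hxi
      have := (hxy n).2
      rw [← (hxy n).1] at this
      exact this
    · have h1 : x i = 0 := by
        by_contra h
        exact hxi (by rw [← he x]; exact Set.mem_insert_of_mem _ h)
      have h2 : y i = 0 := by
        by_contra h
        apply hxi
        rw [hrange, ← he y]
        exact Set.mem_insert_of_mem _ h
      rw [h1, h2]
  calc Cardinal.mk (lp (fun _ : ι => ℂ) 2) ≤ Cardinal.mk (ℕ → ι × ℂ) :=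
        Cardinal.mk_le_of_injective hinj
    _ = (Cardinal.mk ι * Cardinal.continuum) ^ Cardinal.aleph0 := by
        simp [Cardinal.mk_arrow, Cardinal.mk_prod, mk_complex]
    _ = Cardinal.mk ι ^ Cardinal.aleph0 * (2 ^ Cardinal.aleph0) ^ Cardinal.aleph0 := by
        rw [Cardinal.mul_power, Cardinal.two_power_aleph0]
    _ ≤ Cardinal.mk ι ^ Cardinal.aleph0 * Cardinal.mk ι ^ Cardinal.aleph0 := by
        refine mul_le_mul' le_rfl ?_
        rw [← Cardinal.power_mul, Cardinal.aleph0_mul_aleph0]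
        refine Cardinal.power_le_power_right (le_trans ?_ hι)
        exact le_of_lt (by exact_mod_cast Cardinal.nat_lt_aleph0 2)
    _ = Cardinal.mk ι ^ Cardinal.aleph0 := by
        rw [← Cardinal.power_add, Cardinal.aleph0_add_aleph0]

private lemma lp_card_ge {ι : Type v} (hι : Cardinal.aleph0 ≤ Cardinal.mk ι) :
    Cardinal.mk ι ^ Cardinal.aleph0 ≤ Cardinal.mk (lp (fun _ : ι => ℂ) 2) := by
  -- get an equiv ℕ × ι ≃ ι
  have hcard : Cardinal.mk (ℕ × ι) = Cardinal.mk ι := by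
    simp only [Cardinal.mk_prod, Cardinal.mk_nat, Cardinal.lift_aleph0, Cardinal.lift_uzero]
    exact Cardinal.mul_eq_right hι hι Cardinal.aleph0_ne_zero
  obtain ⟨g⟩ := Cardinal.eq.1 hcard
  -- for each f : ℕ → ι, an injective function F f : ℕ → ι
  set F : (ℕ → ι) → ℕ → ι := fun f n => g (n, f n) with hF
  have hFinj : ∀ f, Function.Injective (F f) := by
    intro f n m hnm
    exact (Prod.mk.injEq _ _ _ _ ▸ g.injective hnm).1
  -- the corresponding lp element
  set c : ℕ → ℂ := fun n => (2 : ℂ)⁻¹ ^ n with hc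
  have hcnorm : ∀ n, ‖c n‖ = (2 : ℝ)⁻¹ ^ n := by
    intro n
    simp [hc, norm_pow]
  have hmem : ∀ f : ℕ → ι, Memℓp (Function.extend (F f) c 0) 2 := by
    intro f
    apply memℓp_gen
    have hzero : ∀ i ∉ Set.range (F f),
        ‖Function.extend (F f) c 0 i‖ ^ (2 : ℝ≥0∞).toReal = 0 := by
      intro i hi
      rw [Function.extend_apply' _ _ _ (by simpa [Set.range] using hi)]
      simp [Real.zero_rpow]
    refine ((hFinj f).summable_iff hzero).1 ?_
    have : ((fun i => ‖Function.extend (F f) c 0 i‖ ^ (2 : ℝ≥0∞).toReal) ∘ F f)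
        = fun n => ((2 : ℝ)⁻¹ ^ n) ^ (2 : ℝ≥0∞).toReal := by
      funext n
      simp only [Function.comp_apply, (hFinj f).extend_apply, hcnorm]
    rw [this]
    have h2 : (2 : ℝ≥0∞).toReal = ((2 : ℕ) : ℝ) := by norm_num
    have : (fun n => ((2 : ℝ)⁻¹ ^ n) ^ (2 : ℝ≥0∞).toReal)
        = fun n => ((4 : ℝ)⁻¹) ^ n := by
      funext n
      rw [h2, Real.rpow_natCast]
      rw [← pow_mul, mul_comm, pow_mul]
      norm_num
    rw [this]
    exact summable_geometric_of_lt_one (by norm_num) (by norm_num)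
  -- the injection
  set Φ : (ℕ → ι) → lp (fun _ : ι => ℂ) 2 := fun f => ⟨Function.extend (F f) c 0, hmem f⟩
    with hΦ
  have hΦinj : Function.Injective Φ := by
    intro f f' hff
    have hcoe : Function.extend (F f) c 0 = Function.extend (F f') c 0 :=
      congrArg Subtype.val hff
    funext n
    -- value at F f n
    have h1 : Function.extend (F f) c 0 (F f n) = c n := (hFinj f).extend_apply c 0 n
    have hne : c n ≠ 0 := by
      simp [hc]
    have h2 : Function.extend (F f') c 0 (F f n) = c n := by rw [← hcoe, h1]
    have hmemr : F f n ∈ Set.range (F f') := by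
      by_contra h
      rw [Function.extend_apply' _ _ _ (by simpa [Set.range] using h)] at h2
      exact hne h2.symm
    obtain ⟨m, hm⟩ := hmemr
    rw [← hm, (hFinj f').extend_apply] at h2
    -- c m = c n implies m = n
    have hmn : m = n := by
      have : ‖c m‖ = ‖c n‖ := by rw [h2]
      rw [hcnorm, hcnorm] at this
      exact pow_right_injective₀ (by norm_num) (by norm_num) this
    subst hmn
    have := g.injective hm
    exact ((Prod.mk.injEq _ _ _ _ ▸ this).2).symm
  calc Cardinal.mk ι ^ Cardinal.aleph0 = Cardinal.mk (ℕ → ι) := by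
        simp [Cardinal.mk_arrow, Cardinal.mk_nat, Cardinal.lift_aleph0, Cardinal.lift_id, Cardinal.lift_uzero]
    _ ≤ Cardinal.mk (lp (fun _ : ι => ℂ) 2) := Cardinal.mk_le_of_injective hΦinj

/-- A complex Hilbert space with a Hilbert (orthonormal) basis of infinite
cardinality `λ` has cardinality `λ ^ ℵ₀`. -/
theorem hilbert_card {H : Type u} [NormedAddCommGroup H] [InnerProductSpace ℂ H]
    [CompleteSpace H] {ι : Type u} (b : HilbertBasis ι ℂ H)
    (hι : Cardinal.aleph0 ≤ Cardinal.mk ι) :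
    Cardinal.mk H = Cardinal.mk ι ^ Cardinal.aleph0 := by
  have hH : Cardinal.mk H = Cardinal.mk (lp (fun _ : ι => ℂ) 2) :=
    Cardinal.mk_congr b.repr.toLinearEquiv.toEquiv
  rw [hH]
  exact le_antisymm (lp_card_le hι) (lp_card_ge hι)
end

section
/- If U : Hilb_r → Set is a faithful functor preserving directed colimits, then every element x ∈ U(A) for a Hilbert space A is supported on some finite-dimensional subspace of A. -/
open CategoryTheory CategoryTheory.Limits

universe u

/-- Objects of the category of (small) complex Hilbert spaces. -/
structure HilbObj : Type (u + 1) where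
  carrier : Type u
  [normedAddCommGroup : NormedAddCommGroup carrier]
  [innerProductSpace : InnerProductSpace ℂ carrier]
  [completeSpace : CompleteSpace carrier]

attribute [instance] HilbObj.normedAddCommGroup HilbObj.innerProductSpace
  HilbObj.completeSpace

/-- The category of complex Hilbert spaces with linear isometries (`Hilb_r`). -/
instance : Category HilbObj where
  Hom A B := A.carrier →ₗᵢ[ℂ] B.carrier
  id A := LinearIsometry.id
  comp f g := g.comp f
  id_comp f := rfl
  comp_id f := rfl
  assoc f g h := rfl

/-- A morphism of `HilbObj`, as a linear isometry. -/
noncomputable def homIso {A B : HilbObj} (f : A ⟶ B) : A.carrier →ₗᵢ[ℂ] B.carrier := f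

/-- A closed subspace of a Hilbert space, as an object of `HilbObj`. -/
noncomputable def subObj (A : HilbObj) (A₀ : Submodule ℂ A.carrier) (h : IsClosed (A₀ : Set A.carrier)) :
    HilbObj :=
  @HilbObj.mk A₀ _ _ h.completeSpace_coe

/-- The inclusion of a closed subspace, as a morphism of `HilbObj`. -/
noncomputable def incl (A : HilbObj) (A₀ : Submodule ℂ A.carrier) (h : IsClosed (A₀ : Set A.carrier)) :
    subObj A A₀ h ⟶ A :=
  A₀.subtypeₗᵢ

/-- `x ∈ U A` is supported on the subspace `A₀ ⊆ A` if any two linear isometries out of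
`A` which agree on `A₀` are sent by `U` to functions agreeing at `x`. -/
def Supported (U : HilbObj.{u} ⥤ Type u) (A : HilbObj) (x : U.obj A)
    (A₀ : Submodule ℂ A.carrier) : Prop :=
  ∀ (B : HilbObj) (f g : A ⟶ B), (∀ a ∈ A₀, homIso f a = homIso g a) →
    U.map f x = U.map g x

/-- `U` preserves directed colimits if it preserves colimits of shape `J` for every
nonempty directed poset `J`. -/
def PreservesDirectedColimits (U : HilbObj.{u} ⥤ Type u) : Prop :=
  ∀ (J : Type u) (_ : Preorder J) (_ : IsDirected J (· ≤ ·)) (_ : Nonempty J),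
    Nonempty (PreservesColimitsOfShape J U)

noncomputable section Aux

variable (A : HilbObj.{u})

/-- The directed poset of finite-dimensional subspaces of `A`. -/
abbrev JJ : Type u := {p : Submodule ℂ A.carrier // FiniteDimensional ℂ p}

instance : IsDirected (JJ A) (· ≤ ·) :=
  ⟨fun i j => ⟨⟨i.1 ⊔ j.1, by haveI := i.2; haveI := j.2; infer_instance⟩,
    show i.1 ≤ i.1 ⊔ j.1 from le_sup_left, show j.1 ≤ i.1 ⊔ j.1 from le_sup_right⟩⟩

instance : Nonempty (JJ A) := ⟨⟨⊥, inferInstance⟩⟩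

/-- A finite-dimensional subspace, as an object of `HilbObj`. -/
def Fobj (j : JJ A) : HilbObj :=
  subObj A j.1 (haveI := j.2; j.1.closed_of_finiteDimensional)

/-- The diagram of finite-dimensional subspaces of `A`. -/
def FF : JJ A ⥤ HilbObj where
  obj j := Fobj A j
  map {i j} f :=
    (⟨Submodule.inclusion (leOfHom f), fun _ => rfl⟩ : _ →ₗᵢ[ℂ] _)
  map_id j := LinearIsometry.ext fun _ => rfl
  map_comp f g := LinearIsometry.ext fun _ => rfl

/-- The cocone on the diagram with apex `A`. -/
def cc : Cocone (FF A) where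
  pt := A
  ι :=
    { app := fun j => incl A j.1 (haveI := j.2; j.1.closed_of_finiteDimensional)
      naturality := fun i j f => LinearIsometry.ext fun _ => rfl }

lemma appeq (s : Cocone (FF A)) {i j : JJ A} (h : i ≤ j) (a : A.carrier)
    (ha : a ∈ i.1) :
    homIso (s.ι.app i) ⟨a, ha⟩ = homIso (s.ι.app j) ⟨a, h ha⟩ := by
  rw [← s.w (homOfLE h)]
  rfl

/-- The span of a single element, as an index. -/
def jsingle (a : A.carrier) : JJ A := ⟨Submodule.span ℂ {a}, inferInstance⟩

/-- The underlying function of the descent morphism. -/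
def descFun (s : Cocone (FF A)) (a : A.carrier) : s.pt.carrier :=
  homIso (s.ι.app (jsingle A a)) ⟨a, Submodule.mem_span_singleton_self a⟩

lemma descFun_eq (s : Cocone (FF A)) (j : JJ A) (a : A.carrier) (ha : a ∈ j.1) :
    descFun A s a = homIso (s.ι.app j) ⟨a, ha⟩ := by
  haveI := j.2
  let k : JJ A := ⟨j.1 ⊔ Submodule.span ℂ {a}, inferInstance⟩
  have h1 : jsingle A a ≤ k := show Submodule.span ℂ {a} ≤ j.1 ⊔ _ from le_sup_right
  have h2 : j ≤ k := show j.1 ≤ j.1 ⊔ _ from le_sup_left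
  exact (appeq A s h1 a (Submodule.mem_span_singleton_self a)).trans (appeq A s h2 a ha).symm

/-- The descent morphism. -/
def descHom (s : Cocone (FF A)) : A ⟶ s.pt :=
  { toFun := descFun A s
    map_add' := fun a b => by
      let j : JJ A := ⟨Submodule.span ℂ {a} ⊔ Submodule.span ℂ {b}, inferInstance⟩
      have ha : a ∈ j.1 := Submodule.mem_sup_left (Submodule.mem_span_singleton_self a)
      have hb : b ∈ j.1 := Submodule.mem_sup_right (Submodule.mem_span_singleton_self b)
      have hab : a + b ∈ j.1 := add_mem ha hb
      show descFun A s (a + b) = descFun A s a + descFun A s b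
      rw [descFun_eq A s j a ha, descFun_eq A s j b hb, descFun_eq A s j (a + b) hab]
      exact (homIso (s.ι.app j)).map_add ⟨a, ha⟩ ⟨b, hb⟩
    map_smul' := fun c a => by
      let j : JJ A := jsingle A a
      have ha : a ∈ j.1 := Submodule.mem_span_singleton_self a
      have hca : c • a ∈ j.1 := j.1.smul_mem c ha
      show descFun A s (c • a) = c • descFun A s a
      rw [descFun_eq A s j a ha, descFun_eq A s j (c • a) hca]
      exact (homIso (s.ι.app j)).map_smul c ⟨a, ha⟩
    norm_map' := fun a => (homIso (s.ι.app (jsingle A a))).norm_map _ }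

/-- `A` is the colimit of its finite-dimensional subspaces. -/
def ccIsColimit : IsColimit (cc A) where
  desc s := descHom A s
  fac s j := LinearIsometry.ext fun z => descFun_eq A s j z.1 z.2
  uniq s m hm := LinearIsometry.ext fun a => by
    have h := congrArg (fun (f : Fobj A (jsingle A a) ⟶ s.pt) =>
      homIso f ⟨a, Submodule.mem_span_singleton_self a⟩) (hm (jsingle A a))
    exact h.trans (descFun_eq A s (jsingle A a) a _).symm

end Aux

/-- If `U : Hilb_r ⥤ Set` is faithful and preserves directed colimits, then every
`x ∈ U A` is supported on some finite-dimensional subspace of `A`. -/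
theorem supported_on_finiteDimensional (U : HilbObj.{u} ⥤ Type u) (hU : U.Faithful)
    (hdir : PreservesDirectedColimits U) (A : HilbObj) (x : U.obj A) :
    ∃ A₀ : Submodule ℂ A.carrier, FiniteDimensional ℂ A₀ ∧ Supported U A x A₀ := by
  haveI : PreservesColimitsOfShape (JJ A) U :=
    (hdir (JJ A) inferInstance inferInstance inferInstance).some
  have hc : IsColimit (U.mapCocone (cc A)) := isColimitOfPreserves U (ccIsColimit A)
  obtain ⟨j, y, hy⟩ := Types.jointly_surjective _ hc x
  haveI := j.2
  refine ⟨j.1, j.2, fun B f g hfg => ?_⟩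
  have hcomp : (cc A).ι.app j ≫ f = (cc A).ι.app j ≫ g :=
    LinearIsometry.ext fun z => hfg z.1 z.2
  have hy' : U.map ((cc A).ι.app j) y = x := hy
  rw [← hy']
  change (U.map ((cc A).ι.app j) ≫ U.map f) y = (U.map ((cc A).ι.app j) ≫ U.map g) y
  have key : U.map ((cc A).ι.app j) ≫ U.map f = U.map ((cc A).ι.app j) ≫ U.map g :=
    (U.map_comp _ _).symm.trans ((congrArg U.map hcomp).trans (U.map_comp _ _))
  exact congrArg (fun h => h y) key
end

section
/- If U : Hilb_r → Set is a faithful functor preserving directed colimits, then for every nonzero subspace A₀ of an infinite-dimensional Hilbert space A, there is x₀ ∈ U(A₀) such that U(i_{A₀,A})(x₀) is not supported on the zero subspace. -/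
open CategoryTheory CategoryTheory.Limits

universe u

/-- The `L²` direct sum `A ⊕ A` as an object of `HilbObj`. -/
noncomputable def doubleObj (A : HilbObj) : HilbObj :=
  HilbObj.mk (WithLp 2 (A.carrier × A.carrier))

/-- Inclusion into the first summand. -/
noncomputable def inlIso (A : HilbObj) : A ⟶ doubleObj A where
  toLinearMap := ((WithLp.linearEquiv 2 ℂ (A.carrier × A.carrier)).symm.toLinearMap).comp
    (LinearMap.inl ℂ A.carrier A.carrier)
  norm_map' := by
    intro x
    show ‖(WithLp.equiv 2 (A.carrier × A.carrier)).symm (x, 0)‖ = ‖x‖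
    have h := WithLp.prod_norm_sq_eq_of_L2
      ((WithLp.equiv 2 (A.carrier × A.carrier)).symm (x, 0))
    simp only [WithLp.equiv_symm_apply, WithLp.toLp_fst, WithLp.toLp_snd, norm_zero] at h ⊢
    have h1 : (0:ℝ) ≤ ‖(WithLp.equiv 2 (A.carrier × A.carrier)).symm (x, 0)‖ := norm_nonneg _
    have h2 : (0:ℝ) ≤ ‖x‖ := norm_nonneg _
    nlinarith [h, h1, h2, norm_nonneg (WithLp.toLp 2 (x, 0) : WithLp 2 (A.carrier × A.carrier))]

/-- Inclusion into the second summand. -/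
noncomputable def inrIso (A : HilbObj) : A ⟶ doubleObj A where
  toLinearMap := ((WithLp.linearEquiv 2 ℂ (A.carrier × A.carrier)).symm.toLinearMap).comp
    (LinearMap.inr ℂ A.carrier A.carrier)
  norm_map' := by
    intro x
    show ‖(WithLp.equiv 2 (A.carrier × A.carrier)).symm (0, x)‖ = ‖x‖
    have h := WithLp.prod_norm_sq_eq_of_L2
      ((WithLp.equiv 2 (A.carrier × A.carrier)).symm (0, x))
    simp only [WithLp.equiv_symm_apply, WithLp.toLp_fst, WithLp.toLp_snd, norm_zero] at h ⊢
    have h1 : (0:ℝ) ≤ ‖(WithLp.equiv 2 (A.carrier × A.carrier)).symm (0, x)‖ := norm_nonneg _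
    have h2 : (0:ℝ) ≤ ‖x‖ := norm_nonneg _
    nlinarith [h, h1, h2, norm_nonneg (WithLp.toLp 2 (0, x) : WithLp 2 (A.carrier × A.carrier))]

/-- If `U : Hilb_r ⥤ Set` is faithful and preserves directed colimits, then for every
nonzero closed subspace `A₀` of an infinite-dimensional Hilbert space `A` there is
`x₀ ∈ U A₀` whose image in `U A` is not supported on the zero subspace. -/
theorem exists_nontrivially_supported (U : HilbObj.{u} ⥤ Type u) (hU : U.Faithful)
    (hdir : PreservesDirectedColimits U) (A : HilbObj)
    (hA : ¬ FiniteDimensional ℂ A.carrier) (A₀ : Submodule ℂ A.carrier)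
    (hc : IsClosed (A₀ : Set A.carrier)) (hne : A₀ ≠ ⊥) :
    ∃ x₀ : U.obj (subObj A A₀ hc),
      ¬ Supported U A (U.map (incl A A₀ hc) x₀) (⊥ : Submodule ℂ A.carrier) := by
  by_contra hcon
  push_neg at hcon
  obtain ⟨a, haA, ha0⟩ := Submodule.exists_mem_ne_zero_of_ne_bot hne
  have key : ∀ x₀ : U.obj (subObj A A₀ hc),
      U.map (incl A A₀ hc ≫ inlIso A) x₀ = U.map (incl A A₀ hc ≫ inrIso A) x₀ := by
    intro x₀
    have h0 : ∀ b ∈ (⊥ : Submodule ℂ A.carrier),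
        homIso (inlIso A) b = homIso (inrIso A) b := by
      rintro b hb
      rw [Submodule.mem_bot] at hb
      subst hb
      simp [map_zero]
    have := hcon x₀ (doubleObj A) (inlIso A) (inrIso A) h0
    simpa [FunctorToTypes.map_comp_apply] using this
  have heq : incl A A₀ hc ≫ inlIso A = incl A A₀ hc ≫ inrIso A :=
    hU.map_injective (by ext x; exact key x)
  have heval : homIso (incl A A₀ hc ≫ inlIso A) ⟨a, haA⟩
      = homIso (incl A A₀ hc ≫ inrIso A) ⟨a, haA⟩ := by rw [heq]
  have hfst := congrArg (fun v : WithLp 2 (A.carrier × A.carrier) => v.fst) heval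
  simp only [incl, inlIso, inrIso, homIso] at hfst
  exact absurd hfst ha0
end
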